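/- If a sequence (a_n) of nonzero real numbers has Raabe value p with p > 1, then the series ∑_{n=1}^∞ a_n converges absolutely, i.e., ∑_{n=1}^∞ |a_n| converges. -/

import Mathlib

open Filter

lemma raabe_aux_limit (r : ℝ) :
    Tendsto (fun n : ℕ => (n : ℝ) * ((1 + 1/n) ^ r - 1)) atTop (nhds r) := by
  have hd : HasDerivAt (fun x : ℝ => x ^ r) (r * (1:ℝ) ^ (r - 1)) 1 :=
    Real.hasDerivAt_rpow_const (Or.inl one_ne_zero)
  rw [Real.one_rpow, mul_one] at hd
  have hslope := hasDerivAt_iff_tendsto_slope.1 hd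
  have hf : Tendsto (fun n : ℕ => (1 : ℝ) + 1 / n) atTop (nhdsWithin 1 {(1:ℝ)}ᶜ) := by
    rw [tendsto_nhdsWithin_iff]
    constructor
    · have : Tendsto (fun n : ℕ => 1 / (n:ℝ)) atTop (nhds 0) := tendsto_one_div_atTop_nhds_zero_nat
      simpa using (tendsto_const_nhds (x := (1:ℝ)) (f := atTop)).add this
    · filter_upwards [eventually_ge_atTop 1] with n hn
      have : (0:ℝ) < 1 / n := by positivity
      simp only [Set.mem_compl_iff, Set.mem_singleton_iff]
      nlinarith
  have := hslope.comp hf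
  apply this.congr'
  filter_upwards [eventually_ge_atTop 1] with n hn
  have hn0 : (n:ℝ) ≠ 0 := by positivity
  simp only [Function.comp, slope_def_field, Real.one_rpow]
  field_simp
  ring

/-- If a sequence `(aₙ)` of nonzero real numbers has Raabe value `p > 1`, then
`∑ₙ |aₙ|` converges, i.e. the series converges absolutely. -/
theorem raabe_abs_convergent (a : ℕ → ℝ) (ha : ∀ n, a n ≠ 0) (p : ℝ)
    (hp : Tendsto (fun n : ℕ => (n : ℝ) * (|a n / a (n + 1)| - 1)) atTop (nhds p))
    (hp1 : 1 < p) :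
    Summable (fun n => |a n|) := by
  set r : ℝ := (p + 1) / 2 with hr
  have hr1 : 1 < r := by rw [hr]; linarith
  have hrp : r < p := by rw [hr]; linarith
  set q : ℝ := (r + p) / 2 with hq
  have h1 : ∀ᶠ n : ℕ in atTop, (n : ℝ) * ((1 + 1/n) ^ r - 1) < q :=
    (raabe_aux_limit r).eventually_lt_const (by rw [hq]; linarith)
  have h2 : ∀ᶠ n : ℕ in atTop, q < (n : ℝ) * (|a n / a (n + 1)| - 1) :=
    hp.eventually_const_lt (by rw [hq]; linarith)
  obtain ⟨N, hN⟩ := ((h1.and h2).and (eventually_ge_atTop 1)).exists_forall_of_atTop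
  -- key step inequality
  have key : ∀ n, N ≤ n → ((n:ℝ) + 1) ^ r * |a (n + 1)| ≤ (n:ℝ) ^ r * |a n| := by
    intro n hn
    obtain ⟨⟨hA, hB⟩, hC⟩ := hN n hn
    have hn0 : (0:ℝ) < n := by exact_mod_cast hC
    have hlt : (1 + 1/(n:ℝ)) ^ r < |a n / a (n + 1)| := by
      nlinarith [hA, hB, hn0]
    rw [abs_div] at hlt
    have h1n : (1 : ℝ) + 1/n = ((n:ℝ)+1)/n := by field_simp
    rw [h1n, Real.div_rpow (by positivity) hn0.le] at hlt
    have hpos1 : (0:ℝ) < (n:ℝ) ^ r := Real.rpow_pos_of_pos hn0 r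
    have hpos2 : (0:ℝ) < |a (n+1)| := abs_pos.2 (ha _)
    rw [div_lt_div_iff₀ hpos1 hpos2] at hlt
    linarith
  -- monotone bound
  have bound : ∀ n, N ≤ n → (n:ℝ) ^ r * |a n| ≤ (N:ℝ) ^ r * |a N| := by
    intro n hn
    induction n, hn using Nat.le_induction with
    | base => exact le_refl _
    | succ m hm ih =>
      push_cast
      calc ((m:ℝ)+1) ^ r * |a (m+1)| ≤ (m:ℝ) ^ r * |a m| := key m hm
        _ ≤ _ := ih
  have hN1 : 1 ≤ N := (hN N le_rfl).2
  set C : ℝ := (N:ℝ) ^ r * |a N| with hC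
  have hg : Summable (fun n : ℕ => C * (1 / (n:ℝ) ^ r)) :=
    (Real.summable_one_div_nat_rpow.2 hr1).mul_left C
  rw [← summable_nat_add_iff N]
  apply Summable.of_nonneg_of_le (fun n => abs_nonneg _) _ ((summable_nat_add_iff N).2 hg)
  intro n
  have hpos : (0:ℝ) < ((n + N : ℕ) : ℝ) ^ r := by
    apply Real.rpow_pos_of_pos
    have : (0:ℕ) < n + N := by omega
    exact_mod_cast this
  have hb := bound (n + N) (Nat.le_add_left N n)
  rw [mul_one_div, le_div_iff₀ hpos, mul_comm]
  exact hb
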